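/- Assume g ≠ 1 and let α ∈ ZMod p with h = g^α. Let c, c_a, c_b ∈ G and x₁, x₂, f₁, f₂, za₁, za₂, zb₁, zb₂ ∈ ZMod p with x₁ ≠ x₂, satisfying for i = 1, 2: c^{x_i} · c_a = g^{f_i} · h^{za_i} and c^{x_i − f_i} · c_b = h^{zb_i} (where c^{x_i − f_i} denotes c raised to the representative of x_i − f_i). Set m := (f₁ − f₂)·(x₁ − x₂)⁻¹ and rho := (za₁ − za₂)·(x₁ − x₂)⁻¹. Then m·(1 − m)·(x₁ − x₂) = α·((zb₁ − zb₂) − rho·((x₁ − x₂) − (f₁ − f₂))); consequently, either m = 0, or m = 1, or ((zb₁ − zb₂) − rho·((x₁ − x₂) − (f₁ − f₂)) ≠ 0 and α = m·(1 − m)·(x₁ − x₂)·((zb₁ − zb₂) − rho·((x₁ − x₂) − (f₁ − f₂)))⁻¹). (Second extraction step in the special soundness of the bit-commitment sigma protocol: the extracted committed value m is a bit, unless the discrete logarithm of h in base g can be computed.) -/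

import Mathlib

section aux

variable {p : ℕ} [Fact p.Prime] {G : Type*} [CommGroup G] [Fintype G]

lemma aux_ord (hG : Fintype.card G = p) (g : G) (hg : g ≠ 1) : orderOf g = p := by
  have h1 : g ^ p = 1 := by rw [← hG]; exact pow_card_eq_one
  exact orderOf_eq_prime h1 hg

lemma aux_pow_cast (hG : Fintype.card G = p) (g : G) (hg : g ≠ 1) (n : ℕ) :
    g ^ ((n : ZMod p)).val = g ^ n := by
  rw [pow_eq_pow_iff_modEq, aux_ord hG g hg]
  exact (ZMod.natCast_eq_natCast_iff _ _ _).mp (by simp [ZMod.natCast_val, ZMod.cast_id])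

lemma aux_inj (hG : Fintype.card G = p) (g : G) (hg : g ≠ 1) {a b : ZMod p}
    (h : g ^ a.val = g ^ b.val) : a = b := by
  rw [pow_eq_pow_iff_modEq, aux_ord hG g hg] at h
  have := (ZMod.natCast_eq_natCast_iff _ _ _).mpr h
  simpa [ZMod.natCast_val, ZMod.cast_id] using this

lemma aux_surj (hG : Fintype.card G = p) (g : G) (hg : g ≠ 1) (c : G) :
    ∃ γ : ZMod p, c = g ^ γ.val := by
  have hp : Nat.card (Subgroup.zpowers g) = Nat.card G := by
    rw [Nat.card_zpowers, aux_ord hG g hg, Nat.card_eq_fintype_card, hG]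
  have htop : Subgroup.zpowers g = ⊤ := Subgroup.eq_top_of_card_eq _ hp
  have hc : c ∈ Subgroup.zpowers g := htop ▸ Subgroup.mem_top c
  rw [← mem_powers_iff_mem_zpowers] at hc
  obtain ⟨n, hn⟩ := hc
  exact ⟨(n : ZMod p), by rw [aux_pow_cast hG g hg]; exact hn.symm⟩

end aux

/-- Second extraction step in the special soundness of the bit-commitment
sigma protocol: the extracted committed value `m` is a bit, unless the
discrete logarithm of `h` in base `g` can be computed. -/
theorem bit_sigma_extract_bit {p : ℕ} [Fact p.Prime] {G : Type*} [CommGroup G]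
    [Fintype G] (hG : Fintype.card G = p) (g h : G) (hg : g ≠ 1)
    (α : ZMod p) (hα : h = g ^ α.val)
    (c ca cb : G) (x₁ x₂ f₁ f₂ za₁ za₂ zb₁ zb₂ : ZMod p) (hx : x₁ ≠ x₂)
    (h₁a : c ^ x₁.val * ca = g ^ f₁.val * h ^ za₁.val)
    (h₂a : c ^ x₂.val * ca = g ^ f₂.val * h ^ za₂.val)
    (h₁b : c ^ (x₁ - f₁).val * cb = h ^ zb₁.val)
    (h₂b : c ^ (x₂ - f₂).val * cb = h ^ zb₂.val)
    (m : ZMod p) (hm : m = (f₁ - f₂) * (x₁ - x₂)⁻¹)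
    (rho : ZMod p) (hrho : rho = (za₁ - za₂) * (x₁ - x₂)⁻¹) :
    m * (1 - m) * (x₁ - x₂)
        = α * ((zb₁ - zb₂) - rho * ((x₁ - x₂) - (f₁ - f₂))) ∧
      (m = 0 ∨ m = 1 ∨
        ((zb₁ - zb₂) - rho * ((x₁ - x₂) - (f₁ - f₂)) ≠ 0 ∧
          α = m * (1 - m) * (x₁ - x₂)
                * ((zb₁ - zb₂) - rho * ((x₁ - x₂) - (f₁ - f₂)))⁻¹)) := by
  obtain ⟨γ, hγ⟩ := aux_surj hG g hg c
  obtain ⟨δ, hδ⟩ := aux_surj hG g hg ca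
  obtain ⟨ε, hε⟩ := aux_surj hG g hg cb
  -- a helper to convert multiplicative equations to ZMod equations
  have key : ∀ (a b : ZMod p), g ^ a.val = g ^ b.val → a = b := fun a b => aux_inj hG g hg
  have cast_pow : ∀ (n : ℕ), g ^ ((n : ZMod p)).val = g ^ n := aux_pow_cast hG g hg
  have conv1 : ∀ (a b u v : ZMod p), g ^ a.val * g ^ b.val = g ^ u.val * g ^ v.val → a + b = u + v := by
    intro a b u v hh
    apply key
    rw [show (a+b) = ((a.val + b.val : ℕ) : ZMod p) by push_cast; simp [ZMod.natCast_val, ZMod.cast_id],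
        show (u+v) = ((u.val + v.val : ℕ) : ZMod p) by push_cast; simp [ZMod.natCast_val, ZMod.cast_id],
        cast_pow, cast_pow, pow_add, pow_add, hh]
  have powpow : ∀ (a b : ZMod p), (g ^ a.val) ^ b.val = g ^ (a*b).val := by
    intro a b
    rw [← pow_mul, show (a*b) = ((a.val * b.val : ℕ) : ZMod p) by push_cast; simp [ZMod.natCast_val, ZMod.cast_id], cast_pow]
  rw [hγ, hδ, hα, powpow, powpow] at h₁a h₂a
  rw [hγ, hε, hα, powpow, powpow] at h₁b h₂b
  have e1 : γ * x₁ + δ = f₁ + α * za₁ := conv1 _ _ _ _ h₁a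
  have e2 : γ * x₂ + δ = f₂ + α * za₂ := conv1 _ _ _ _ h₂a
  have e3 : γ * (x₁ - f₁) + ε = 0 + α * zb₁ := by
    apply conv1; simpa using h₁b
  have e4 : γ * (x₂ - f₂) + ε = 0 + α * zb₂ := by
    apply conv1; simpa using h₂b
  have hxne : x₁ - x₂ ≠ 0 := sub_ne_zero.mpr hx
  have hγeq : γ = m + α * rho := by
    have h5 : γ * (x₁ - x₂) = (f₁ - f₂) + α * (za₁ - za₂) := by ring_nf; linear_combination e1 - e2
    have hinv := mul_inv_cancel₀ hxne
    linear_combination (x₁ - x₂)⁻¹ * h5 - γ * hinv - hm - α * hrho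
  have h6 : γ * ((x₁ - x₂) - (f₁ - f₂)) = α * (zb₁ - zb₂) := by linear_combination e3 - e4
  have hf : f₁ - f₂ = m * (x₁ - x₂) := by rw [hm, mul_assoc, inv_mul_cancel₀ hxne, mul_one]
  have main : m * (1 - m) * (x₁ - x₂)
      = α * ((zb₁ - zb₂) - rho * ((x₁ - x₂) - (f₁ - f₂))) := by
    have h7 : (m + α * rho) * ((x₁ - x₂) - (f₁ - f₂)) = α * (zb₁ - zb₂) := by
      rw [← hγeq]; exact h6
    linear_combination h7 + m * hf
  refine ⟨main, ?_⟩
  by_cases hm0 : m = 0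
  · exact Or.inl hm0
  by_cases hm1 : m = 1
  · exact Or.inr (Or.inl hm1)
  refine Or.inr (Or.inr ⟨?_, ?_⟩)
  · intro hz
    rw [hz, mul_zero] at main
    rcases mul_eq_zero.mp main with h | h
    · rcases mul_eq_zero.mp h with h | h
      · exact hm0 h
      · exact hm1 (by linear_combination -h)
    · exact hxne h
  · have hz : (zb₁ - zb₂) - rho * ((x₁ - x₂) - (f₁ - f₂)) ≠ 0 := by
      intro hz
      rw [hz, mul_zero] at main
      rcases mul_eq_zero.mp main with h | h
      · rcases mul_eq_zero.mp h with h | h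
        · exact hm0 h
        · exact hm1 (by linear_combination -h)
      · exact hxne h
    field_simp
    linear_combination -main
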